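/- Let G be a connected r-regular graph of order n with r ≥ 3 and smallest adjacency eigenvalue λ_n. Then the smallest adjacency eigenvalue of the total graph T(G) equals (2λ_n + r - 2 - √(4λ_n + r² + 4))/2; in particular this quantity is at most -2. -/

import Mathlib

open Matrix Polynomial BigOperators

noncomputable section

namespace SpreadPaper

variable {V : Type*}

/-- The adjacency matrix of a simple graph over `ℝ` (classical decidability). -/
noncomputable def adjMat (G : SimpleGraph V) : Matrix V V ℝ :=
  letI := Classical.decRel G.Adj
  G.adjMatrix ℝ

lemma adjMat_isHermitian (G : SimpleGraph V) : (adjMat G).IsHermitian := by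
  letI := Classical.decRel G.Adj
  ext i j
  simp [adjMat, Matrix.conjTranspose_apply, SimpleGraph.adjMatrix_apply, G.adj_comm]

/-- The degree of a vertex (classical decidability). -/
noncomputable def deg [Fintype V] (G : SimpleGraph V) (v : V) : ℕ :=
  letI := Classical.decRel G.Adj
  G.degree v

/-- The signless Laplacian matrix `D + A` of a graph. -/
noncomputable def signQ [Fintype V] [DecidableEq V] (G : SimpleGraph V) : Matrix V V ℝ :=
  Matrix.diagonal (fun v => (deg G v : ℝ)) + adjMat G

lemma signQ_isHermitian [Fintype V] [DecidableEq V] (G : SimpleGraph V) :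
    (signQ G).IsHermitian :=
  (Matrix.isHermitian_diagonal _).add (adjMat_isHermitian G)

/-- The Laplacian matrix `D - A` of a graph. -/
noncomputable def lap [Fintype V] [DecidableEq V] (G : SimpleGraph V) : Matrix V V ℝ :=
  Matrix.diagonal (fun v => (deg G v : ℝ)) - adjMat G

lemma lap_isHermitian [Fintype V] [DecidableEq V] (G : SimpleGraph V) :
    (lap G).IsHermitian :=
  (Matrix.isHermitian_diagonal _).sub (adjMat_isHermitian G)

/-- The largest eigenvalue of a Hermitian real matrix. -/
noncomputable def maxEig {m : Type*} [Fintype m] [DecidableEq m] {A : Matrix m m ℝ}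
    (hA : A.IsHermitian) : ℝ :=
  ⨆ i, hA.eigenvalues i

/-- The smallest eigenvalue of a Hermitian real matrix. -/
noncomputable def minEig {m : Type*} [Fintype m] [DecidableEq m] {A : Matrix m m ℝ}
    (hA : A.IsHermitian) : ℝ :=
  ⨅ i, hA.eigenvalues i

/-- The spread (largest minus smallest eigenvalue) of a Hermitian real matrix. -/
noncomputable def sprd {m : Type*} [Fintype m] [DecidableEq m] {A : Matrix m m ℝ}
    (hA : A.IsHermitian) : ℝ :=
  maxEig hA - minEig hA

/-- `q` lists the eigenvalues of the Hermitian matrix `A` (with multiplicity) in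
nonincreasing order. -/
def IsDescSpectrum {m : Type*} [Fintype m] [DecidableEq m] {A : Matrix m m ℝ}
    (hA : A.IsHermitian) {k : ℕ} (q : Fin k → ℝ) : Prop :=
  Antitone q ∧ ∃ e : Fin k ≃ m, ∀ i, q i = hA.eigenvalues (e i)

noncomputable instance edgeSetFintype [Fintype V] (G : SimpleGraph V) : Fintype G.edgeSet :=
  Set.Finite.fintype (Set.toFinite _)

/-- The number of edges of a graph. -/
noncomputable def numEdges (G : SimpleGraph V) : ℕ := Nat.card G.edgeSet

/-- The total graph of `G`: vertices are the vertices and edges of `G`, with adjacency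
given by adjacency in `G`, adjacency in the line graph, or vertex-edge incidence. -/
def totalGraph (G : SimpleGraph V) : SimpleGraph (V ⊕ G.edgeSet) where
  Adj x y :=
    match x, y with
    | Sum.inl u, Sum.inl v => G.Adj u v
    | Sum.inl u, Sum.inr e => u ∈ (e : Sym2 V)
    | Sum.inr e, Sum.inl u => u ∈ (e : Sym2 V)
    | Sum.inr e, Sum.inr f => e ≠ f ∧ ∃ v, v ∈ (e : Sym2 V) ∧ v ∈ (f : Sym2 V)
  symm := by
    constructor
    rintro (u|e) (v|f) h
    · exact G.adj_symm h
    · exact h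
    · exact h
    · exact ⟨h.1.symm, h.2.choose, h.2.choose_spec.2, h.2.choose_spec.1⟩
  loopless := by
    constructor
    rintro (u|e) h
    · exact G.irrefl h
    · exact h.1 rfl

/-- The join `G ∨ H` of two graphs: all edges between the two vertex sets are added. -/
def joinG {α β : Type*} (G : SimpleGraph α) (H : SimpleGraph β) : SimpleGraph (α ⊕ β) where
  Adj x y :=
    match x, y with
    | Sum.inl a, Sum.inl b => G.Adj a b
    | Sum.inr a, Sum.inr b => H.Adj a b
    | Sum.inl _, Sum.inr _ => True
    | Sum.inr _, Sum.inl _ => True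
  symm := by
    constructor
    rintro (a|a) (b|b) h
    · exact G.adj_symm h
    · exact trivial
    · exact trivial
    · exact H.adj_symm h
  loopless := by
    constructor
    rintro (a|a) h
    · exact G.irrefl h
    · exact H.irrefl h

/-- The disjoint union of two graphs. -/
def dunion {α β : Type*} (G : SimpleGraph α) (H : SimpleGraph β) : SimpleGraph (α ⊕ β) where
  Adj x y :=
    match x, y with
    | Sum.inl a, Sum.inl b => G.Adj a b
    | Sum.inr a, Sum.inr b => H.Adj a b
    | Sum.inl _, Sum.inr _ => False
    | Sum.inr _, Sum.inl _ => False
  symm := by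
    constructor
    rintro (a|a) (b|b) h
    · exact G.adj_symm h
    · exact h.elim
    · exact h.elim
    · exact H.adj_symm h
  loopless := by
    constructor
    rintro (a|a) h
    · exact G.irrefl h
    · exact H.irrefl h

/-- `G` is `r`-regular. -/
def IsReg [Fintype V] (G : SimpleGraph V) (r : ℕ) : Prop := ∀ v, deg G v = r

/-- The minimum degree of a graph. -/
noncomputable def minDeg [Fintype V] (G : SimpleGraph V) : ℕ := sInf (Set.range (deg G))

/-- The maximum degree of a graph. -/
noncomputable def maxDeg [Fintype V] (G : SimpleGraph V) : ℕ := sSup (Set.range (deg G))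

/-- The first Zagreb index of a graph: the sum of the squares of the vertex degrees. -/
noncomputable def zagreb [Fintype V] (G : SimpleGraph V) : ℕ := ∑ v, (deg G v) ^ 2

/-- The vertex connectivity of `G` is at most `k`: some set of at most `k` vertices
disconnects `G`. -/
def HasConnLe (G : SimpleGraph V) (k : ℕ) : Prop :=
  ∃ U : Set V, Nat.card U ≤ k ∧ (Uᶜ).Nonempty ∧ ¬ (G.induce Uᶜ).Preconnected

/-! ### Auxiliary spectral toolkit -/

section Toolkit
variable {m : Type*} [Fintype m] [DecidableEq m] {A : Matrix m m ℝ} (hA : A.IsHermitian)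

/-- eigenvectors as plain functions -/
noncomputable def evec (i : m) : m → ℝ := ⇑(hA.eigenvectorBasis i)

lemma evec_dot (i j : m) : evec hA i ⬝ᵥ evec hA j = if i = j then 1 else 0 := by
  have h := orthonormal_iff_ite.mp hA.eigenvectorBasis.orthonormal i j
  rw [PiLp.inner_apply] at h
  simpa [evec, dotProduct, conj_trivial, mul_comm] using h

lemma parseval (x y : m → ℝ) : x ⬝ᵥ y = ∑ i, (evec hA i ⬝ᵥ x) * (evec hA i ⬝ᵥ y) := by
  have h := hA.eigenvectorBasis.sum_inner_mul_inner ((WithLp.equiv 2 (m → ℝ)).symm x)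
    ((WithLp.equiv 2 (m → ℝ)).symm y)
  simp only [PiLp.inner_apply, RCLike.inner_apply, conj_trivial,
    WithLp.equiv_symm_apply, WithLp.ofLp_toLp] at h
  rw [dotProduct, Finset.sum_congr rfl fun i _ => mul_comm (x i) (y i), ← h]
  refine Finset.sum_congr rfl fun i _ => ?_
  rw [dotProduct, dotProduct]
  congr 1
  exact Finset.sum_congr rfl fun j _ => mul_comm _ _

omit [Fintype m] [DecidableEq m] in
lemma transpose_eq_of_herm (hA : A.IsHermitian) : Aᵀ = A := by
  ext i j
  have := congrFun (congrFun hA i) j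
  simpa [Matrix.conjTranspose_apply] using this

lemma mulVec_evec (i : m) : A *ᵥ evec hA i = hA.eigenvalues i • evec hA i := by
  simpa [evec] using hA.mulVec_eigenvectorBasis i

lemma evec_dot_mulVec (i : m) (x : m → ℝ) :
    evec hA i ⬝ᵥ (A *ᵥ x) = hA.eigenvalues i * (evec hA i ⬝ᵥ x) := by
  rw [dotProduct_mulVec, ← mulVec_transpose, transpose_eq_of_herm hA, mulVec_evec,
    smul_dotProduct, smul_eq_mul]

lemma quadform_eq (x : m → ℝ) :
    x ⬝ᵥ (A *ᵥ x) = ∑ i, hA.eigenvalues i * (evec hA i ⬝ᵥ x) ^ 2 := by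
  rw [parseval hA x (A *ᵥ x)]
  refine Finset.sum_congr rfl fun i _ => ?_
  rw [evec_dot_mulVec]; ring

lemma minEig_le_eigenvalues (i : m) : minEig hA ≤ hA.eigenvalues i :=
  ciInf_le (Set.finite_range _).bddBelow i

lemma exists_minEig [Nonempty m] : ∃ i, hA.eigenvalues i = minEig hA := by
  obtain ⟨i, -, hi⟩ := Finset.exists_min_image Finset.univ hA.eigenvalues
    ⟨Classical.arbitrary m, Finset.mem_univ _⟩
  exact ⟨i, le_antisymm (le_ciInf fun j => hi j (Finset.mem_univ j))
    (minEig_le_eigenvalues hA i)⟩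

lemma rayleigh_lower (x : m → ℝ) : minEig hA * (x ⬝ᵥ x) ≤ x ⬝ᵥ (A *ᵥ x) := by
  rw [quadform_eq hA x, parseval hA x x, Finset.mul_sum]
  refine Finset.sum_le_sum fun i _ => ?_
  have h1 : (evec hA i ⬝ᵥ x) * (evec hA i ⬝ᵥ x) = (evec hA i ⬝ᵥ x) ^ 2 := (sq _).symm
  rw [h1]
  exact mul_le_mul_of_nonneg_right (minEig_le_eigenvalues hA i) (sq_nonneg _)

omit [DecidableEq m] in
lemma dot_self_nonneg' (v : m → ℝ) : 0 ≤ v ⬝ᵥ v :=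
  Finset.sum_nonneg fun i _ => mul_self_nonneg _

omit [DecidableEq m] in
lemma dot_self_pos {v : m → ℝ} (hv : v ≠ 0) : 0 < v ⬝ᵥ v := by
  obtain ⟨i, hi⟩ := Function.ne_iff.mp hv
  have hi' : v i ≠ 0 := by simpa using hi
  exact Finset.sum_pos' (fun j _ => mul_self_nonneg _)
    ⟨i, Finset.mem_univ i, mul_self_pos.mpr hi'⟩

omit [DecidableEq m] in
lemma eq_zero_of_dot_self {v : m → ℝ} (hv : v ⬝ᵥ v = 0) : v = 0 := by
  by_contra h
  exact (dot_self_pos h).ne' hv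

lemma minEig_le_of_eigvec {θ : ℝ} {v : m → ℝ} (hv : v ≠ 0) (h : A *ᵥ v = θ • v) :
    minEig hA ≤ θ := by
  have h1 := rayleigh_lower hA v
  rw [h, dotProduct_smul, smul_eq_mul] at h1
  exact le_of_mul_le_mul_right (by linarith [h1]) (dot_self_pos hv)

lemma le_minEig [Nonempty m] {θ : ℝ} (h : ∀ x : m → ℝ, θ * (x ⬝ᵥ x) ≤ x ⬝ᵥ (A *ᵥ x)) :
    θ ≤ minEig hA := by
  obtain ⟨i, hi⟩ := exists_minEig hA
  have h1 := h (evec hA i)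
  rw [evec_dot_mulVec, evec_dot] at h1
  simpa [hi] using h1

end Toolkit
/-! ### Incidence matrix -/

section Incidence
variable {V : Type*} [Fintype V] [DecidableEq V] (G : SimpleGraph V)

/-- The vertex-edge incidence matrix. -/
noncomputable def incB : Matrix V G.edgeSet ℝ :=
  Matrix.of fun v e => if v ∈ (e : Sym2 V) then 1 else 0

open scoped Classical in
omit [Fintype V] [DecidableEq V] in
lemma adjMat_apply (u v : V) : adjMat G u v = if G.Adj u v then 1 else 0 := by
  letI := Classical.decRel G.Adj
  rw [adjMat, SimpleGraph.adjMatrix_apply]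

omit [Fintype V] [DecidableEq V] in
lemma adjMat_diag (u : V) : adjMat G u u = 0 := by
  letI := Classical.decRel G.Adj
  rw [adjMat]; simp

lemma deg_eq_ncard (u : V) : deg G u = Nat.card (G.neighborSet u) := by
  letI := Classical.decRel G.Adj
  rw [deg, ← SimpleGraph.card_neighborSet_eq_degree, Nat.card_eq_fintype_card]

lemma sum_incB_diag (u : V) :
    ∑ e : G.edgeSet, incB G u e * incB G u e = (deg G u : ℝ) := by
  letI := Classical.decRel G.Adj
  have h1 : ∀ e : G.edgeSet, incB G u e * incB G u e
      = if u ∈ (e : Sym2 V) then (1:ℝ) else 0 := by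
    intro e; by_cases h : u ∈ (e : Sym2 V) <;> simp [incB, h]
  rw [Finset.sum_congr rfl fun e _ => h1 e, Finset.sum_boole]
  have h2 : (Finset.univ.filter fun e : G.edgeSet => u ∈ (e : Sym2 V)).card
      = Nat.card {e : G.edgeSet // u ∈ (e : Sym2 V)} := by
    rw [Nat.card_eq_fintype_card, Fintype.card_subtype]
  have e1 : {e : G.edgeSet // u ∈ (e : Sym2 V)} ≃ G.neighborSet u :=
    (⟨fun x => ⟨x.1.1, x.1.2, x.2⟩, fun y => ⟨⟨y.1, y.2.1⟩, y.2.2⟩,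
      fun _ => rfl, fun _ => rfl⟩ : _ ≃ G.incidenceSet u).trans
      (G.incidenceSetEquivNeighborSet u)
  rw [h2, Nat.card_congr e1, ← deg_eq_ncard]

lemma sum_incB_offdiag {u v : V} (huv : u ≠ v) :
    ∑ e : G.edgeSet, incB G u e * incB G v e = adjMat G u v := by
  rw [adjMat_apply]
  by_cases hadj : G.Adj u v
  · rw [if_pos hadj]
    have h0 : ∀ f ∈ Finset.univ, f ≠ (⟨s(u,v), hadj⟩ : G.edgeSet) →
        incB G u f * incB G v f = 0 := by
      rintro ⟨f, hf⟩ - hne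
      by_cases h1 : u ∈ f
      · by_cases h2 : v ∈ f
        · exact absurd (Subtype.ext ((Sym2.mem_and_mem_iff huv).mp ⟨h1, h2⟩)) hne
        · simp [incB, h2]
      · simp [incB, h1]
    rw [Finset.sum_eq_single _ h0 (fun h => absurd (Finset.mem_univ _) h)]
    simp [incB, Sym2.mem_mk_left, Sym2.mem_mk_right]
  · rw [if_neg hadj]
    refine Finset.sum_eq_zero ?_
    rintro ⟨f, hf⟩ -
    by_cases h1 : u ∈ f
    · by_cases h2 : v ∈ f
      · have heq := (Sym2.mem_and_mem_iff huv).mp ⟨h1, h2⟩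
        rw [heq] at hf
        exact absurd hf hadj
      · simp [incB, h2]
    · simp [incB, h1]

lemma sum_incB_edge_diag (e : G.edgeSet) :
    ∑ v : V, incB G v e * incB G v e = 2 := by
  obtain ⟨e, he⟩ := e
  induction e with
  | _ a b =>
    have hab : a ≠ b := G.ne_of_adj he
    have h1 : ∀ v : V, incB G v ⟨s(a,b), he⟩ * incB G v ⟨s(a,b), he⟩
        = if v ∈ s(a,b) then (1:ℝ) else 0 := by
      intro v; by_cases h : v ∈ s(a,b) <;> simp [incB, h]
    rw [Finset.sum_congr rfl fun v _ => h1 v, Finset.sum_boole]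
    have h2 : Finset.univ.filter (fun v => v ∈ s(a,b)) = {a, b} := by
      ext v; simp [Sym2.mem_iff]
    rw [h2, Finset.card_pair hab]
    norm_num

lemma sum_incB_edge_shared {e f : G.edgeSet} (hef : e ≠ f) {w : V}
    (hwe : w ∈ (e : Sym2 V)) (hwf : w ∈ (f : Sym2 V)) :
    ∑ v : V, incB G v e * incB G v f = 1 := by
  have h0 : ∀ v ∈ Finset.univ, v ≠ w → incB G v e * incB G v f = 0 := by
    rintro v - hvw
    by_cases h1 : v ∈ (e : Sym2 V)
    · by_cases h2 : v ∈ (f : Sym2 V)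
      · exact absurd (Subtype.ext (Sym2.eq_of_ne_mem hvw h1 hwe h2 hwf)) hef
      · simp [incB, h2]
    · simp [incB, h1]
  rw [Finset.sum_eq_single _ h0 (fun h => absurd (Finset.mem_univ _) h)]
  simp [incB, hwe, hwf]

lemma sum_incB_edge_disjoint {e f : G.edgeSet}
    (h : ¬ ∃ v, v ∈ (e : Sym2 V) ∧ v ∈ (f : Sym2 V)) :
    ∑ v : V, incB G v e * incB G v f = 0 := by
  push_neg at h
  refine Finset.sum_eq_zero fun v _ => ?_
  by_cases h1 : v ∈ (e : Sym2 V)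
  · simp [incB, h v h1]
  · simp [incB, h1]

lemma incB_mul_transpose {r : ℕ} (hreg : IsReg G r) :
    incB G * (incB G)ᵀ = adjMat G + (r : ℝ) • 1 := by
  ext u v
  rw [Matrix.mul_apply]
  simp only [Matrix.transpose_apply, Matrix.add_apply, Matrix.smul_apply, Matrix.one_apply,
    smul_eq_mul]
  by_cases huv : u = v
  · subst huv
    rw [sum_incB_diag, adjMat_diag, hreg u]
    simp
  · rw [sum_incB_offdiag G huv, if_neg huv]
    ring

lemma adjMat_totalGraph :
    adjMat (totalGraph G) = Matrix.fromBlocks (adjMat G) (incB G) (incB G)ᵀ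
      ((incB G)ᵀ * incB G - (2 : ℝ) • 1) := by
  classical
  ext x y
  rcases x with u | e <;> rcases y with v | f <;>
    simp only [Matrix.fromBlocks, Matrix.of_apply, Sum.elim_inl, Sum.elim_inr,
      Matrix.transpose_apply]
  · rw [adjMat_apply, adjMat_apply]
    have : (totalGraph G).Adj (Sum.inl u) (Sum.inl v) ↔ G.Adj u v := Iff.rfl
    exact if_congr this rfl rfl
  · rw [adjMat_apply]
    have : (totalGraph G).Adj (Sum.inl u) (Sum.inr f) ↔ u ∈ (f : Sym2 V) := Iff.rfl
    rw [if_congr this rfl rfl]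
    simp [incB]
  · rw [adjMat_apply]
    have : (totalGraph G).Adj (Sum.inr e) (Sum.inl v) ↔ v ∈ (e : Sym2 V) := Iff.rfl
    rw [if_congr this rfl rfl]
    simp [incB]
  · rw [adjMat_apply, Matrix.sub_apply, Matrix.mul_apply]
    simp only [Matrix.transpose_apply, Matrix.smul_apply, Matrix.one_apply, smul_eq_mul]
    have hadj : (totalGraph G).Adj (Sum.inr e) (Sum.inr f)
        ↔ (e ≠ f ∧ ∃ v, v ∈ (e : Sym2 V) ∧ v ∈ (f : Sym2 V)) := Iff.rfl
    rw [if_congr hadj rfl rfl]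
    by_cases hef : e = f
    · subst hef
      rw [sum_incB_edge_diag, if_neg (by simp), if_pos rfl]
      ring
    · rw [if_neg hef]
      by_cases hsh : ∃ v, v ∈ (e : Sym2 V) ∧ v ∈ (f : Sym2 V)
      · obtain ⟨w, hwe, hwf⟩ := hsh
        rw [if_pos ⟨hef, w, hwe, hwf⟩, sum_incB_edge_shared G hef hwe hwf]
        ring
      · rw [if_neg (fun h => hsh h.2), sum_incB_edge_disjoint G hsh]
        ring

end Incidence
/-! ### Assembly helpers -/

section Helpers
variable {V : Type*} [Fintype V] [DecidableEq V] (G : SimpleGraph V)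

lemma transpose_mulVec_dot {k l : Type*} [Fintype k] [Fintype l]
    (M : Matrix k l ℝ) (x : k → ℝ) (w : l → ℝ) :
    (Mᵀ *ᵥ x) ⬝ᵥ w = x ⬝ᵥ (M *ᵥ w) := by
  rw [Matrix.mulVec_transpose, ← Matrix.dotProduct_mulVec]

lemma incBt_evec_dot {r : ℕ} (hreg : IsReg G r) (i j : V) :
    ((incB G)ᵀ *ᵥ evec (adjMat_isHermitian G) i) ⬝ᵥ ((incB G)ᵀ *ᵥ evec (adjMat_isHermitian G) j)
      = if i = j then (adjMat_isHermitian G).eigenvalues j + r else 0 := by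
  set hA := adjMat_isHermitian G
  rw [transpose_mulVec_dot, Matrix.mulVec_mulVec, incB_mul_transpose G hreg,
    Matrix.add_mulVec, Matrix.smul_mulVec, Matrix.one_mulVec, mulVec_evec,
    dotProduct_add, dotProduct_smul, dotProduct_smul, evec_dot, smul_eq_mul, smul_eq_mul]
  by_cases hij : i = j <;> simp [hij] <;> ring

lemma exists_adj_of_reg {r : ℕ} (hr : 3 ≤ r) (hreg : IsReg G r) [Nonempty V] :
    ∃ u v : V, G.Adj u v := by
  obtain ⟨u⟩ := ‹Nonempty V›
  have h := deg_eq_ncard G u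
  rw [hreg u] at h
  have : Nat.card (G.neighborSet u) ≠ 0 := by omega
  rw [Nat.card_ne_zero] at this
  obtain ⟨⟨v, hv⟩⟩ := this.1
  exact ⟨u, v, hv⟩

lemma smul_sum_elim {α β : Type*} (c : ℝ) (x : α → ℝ) (y : β → ℝ) :
    c • Sum.elim x y = Sum.elim (c • x) (c • y) := by
  funext w; cases w <;> rfl

lemma sum_elim_ne_zero {α β : Type*} {x : α → ℝ} (hx : x ≠ 0) (y : β → ℝ) :
    Sum.elim x y ≠ 0 := by
  intro h
  apply hx
  funext a
  exact congrFun h (Sum.inl a)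

end Helpers

section SumDot
variable {ι k : Type*} [Fintype k]

lemma sum_dotProduct' (s : Finset ι) (f : ι → k → ℝ) (y : k → ℝ) :
    (∑ i ∈ s, f i) ⬝ᵥ y = ∑ i ∈ s, f i ⬝ᵥ y := by
  simp only [dotProduct, Finset.sum_apply, Finset.sum_mul]
  exact Finset.sum_comm

lemma dotProduct_sum' (s : Finset ι) (f : ι → k → ℝ) (y : k → ℝ) :
    y ⬝ᵥ (∑ i ∈ s, f i) = ∑ i ∈ s, y ⬝ᵥ f i := by
  simp only [dotProduct, Finset.sum_apply, Finset.mul_sum]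
  exact Finset.sum_comm

end SumDot
set_option maxHeartbeats 2000000 in
/-- for a connected `r`-regular graph with `r ≥ 3`, the smallest eigenvalue
of the total graph is `(2λ_n + r - 2 - √(4λ_n + r² + 4))/2`, which is at most `-2`. -/
theorem minEig_totalGraph_regular {V : Type*} [Fintype V] [DecidableEq V]
    (G : SimpleGraph V) (hconn : G.Connected) (r : ℕ) (hr : 3 ≤ r) (hreg : IsReg G r) :
    minEig (adjMat_isHermitian (totalGraph G)) =
        (2 * minEig (adjMat_isHermitian G) + (r : ℝ) - 2 -
          Real.sqrt (4 * minEig (adjMat_isHermitian G) + (r : ℝ) ^ 2 + 4)) / 2 ∧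
    (2 * minEig (adjMat_isHermitian G) + (r : ℝ) - 2 -
        Real.sqrt (4 * minEig (adjMat_isHermitian G) + (r : ℝ) ^ 2 + 4)) / 2 ≤ -2 := by
  have hNV : Nonempty V := hconn.nonempty
  set hA := adjMat_isHermitian G with hhA
  set lam := minEig hA with hlam
  set hAT := adjMat_isHermitian (totalGraph G) with hhAT
  set D : ℝ := 4 * lam + (r : ℝ) ^ 2 + 4 with hD
  set θ : ℝ := (2 * lam + (r : ℝ) - 2 - Real.sqrt D) / 2 with hθ
  have hr3 : (3 : ℝ) ≤ (r : ℝ) := by exact_mod_cast hr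
  have hBBt : incB G * (incB G)ᵀ = adjMat G + (r : ℝ) • 1 := incB_mul_transpose G hreg
  have hT : adjMat (totalGraph G) = Matrix.fromBlocks (adjMat G) (incB G) (incB G)ᵀ
      ((incB G)ᵀ * incB G - (2 : ℝ) • 1) := adjMat_totalGraph G
  obtain ⟨i₀, hi₀⟩ := exists_minEig hA
  have heig_ge : ∀ i, lam ≤ hA.eigenvalues i := minEig_le_eigenvalues hA
  -- each eigenvalue is ≥ -r
  have hplusr : ∀ i, 0 ≤ hA.eigenvalues i + r := by
    intro i
    have h := dot_self_nonneg' ((incB G)ᵀ *ᵥ evec hA i)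
    rwa [incBt_evec_dot G hreg i i, if_pos rfl] at h
  have hlamr : -(r : ℝ) ≤ lam := by have := hplusr i₀; rw [hi₀] at this; linarith
  -- lam ≤ -1
  have hlam1 : lam ≤ -1 := by
    obtain ⟨u, v, hadj⟩ := exists_adj_of_reg G hr hreg
    have huv : u ≠ v := G.ne_of_adj hadj
    set x : V → ℝ := Pi.single u 1 - Pi.single v 1 with hx
    have hdot : ∀ w : V → ℝ, x ⬝ᵥ w = w u - w v := by
      intro w
      rw [hx, sub_dotProduct, single_dotProduct, single_dotProduct]
      ring
    have hxx : x ⬝ᵥ x = 2 := by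
      rw [hdot]
      simp [hx, Pi.single_apply, huv, huv.symm]
      norm_num
    have hmv : ∀ w : V, (adjMat G *ᵥ x) w = adjMat G w u - adjMat G w v := by
      intro w
      show (adjMat G w) ⬝ᵥ x = _
      rw [hx, dotProduct_sub, dotProduct_single, dotProduct_single]
      ring
    have hxAx : x ⬝ᵥ (adjMat G *ᵥ x) = -2 := by
      rw [hdot, hmv, hmv, adjMat_diag, adjMat_diag, adjMat_apply, adjMat_apply,
        if_pos hadj, if_pos hadj.symm]
      ring
    have h := rayleigh_lower hA x
    rw [hxx, hxAx] at h
    linarith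
  have hDnn : 0 ≤ D := by nlinarith
  have hsqnn : 0 ≤ Real.sqrt D := Real.sqrt_nonneg D
  have hsq : Real.sqrt D * Real.sqrt D = D := Real.mul_self_sqrt hDnn
  have hsqge : (r : ℝ) - 2 ≤ Real.sqrt D := by
    have h1 : ((r : ℝ) - 2) ^ 2 ≤ D := by nlinarith
    nlinarith [hsq, hsqnn]
  have hθlam : θ ≤ lam := by rw [hθ]; linarith
  have hθ2 : θ ≤ -2 := by
    rcases le_or_gt (2 * lam + (r : ℝ) + 2) 0 with h | h
    · rw [hθ]; linarith
    · have h2 : 2 * lam + (r : ℝ) + 2 ≤ Real.sqrt D := by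
        nlinarith [hsq, hsqnn, mul_nonneg (by linarith : (0:ℝ) ≤ -(lam+1)) (by linarith : (0:ℝ) ≤ lam + r)]
      rw [hθ]; linarith
  have hθp : θ ^ 2 - (2 * lam + (r : ℝ) - 2) * θ + (lam ^ 2 + ((r : ℝ) - 3) * lam - (r : ℝ)) = 0 := by
    have h4 : Real.sqrt D = 2 * lam + (r : ℝ) - 2 - 2 * θ := by rw [hθ]; ring
    have h5 := hsq
    rw [h4, hD] at h5
    nlinarith [h5]
  -- the lower bound
  have hlow : θ ≤ minEig hAT := by
    have hNE : Nonempty (V ⊕ G.edgeSet) := ⟨Sum.inl (Classical.arbitrary V)⟩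
    refine le_minEig hAT fun z => ?_
    set x : V → ℝ := z ∘ Sum.inl with hxdef
    set y : G.edgeSet → ℝ := z ∘ Sum.inr with hydef
    have hz : z = Sum.elim x y := by funext w; cases w <;> rfl
    set a : V → ℝ := fun i => evec hA i ⬝ᵥ x with ha
    set s : V → ℝ := fun i => evec hA i ⬝ᵥ (incB G *ᵥ y) with hs
    set eg : V → ℝ := hA.eigenvalues with heg
    set t : V → ℝ := fun i => if eg i + (r : ℝ) = 0 then 0 else s i ^ 2 / (eg i + (r : ℝ))
      with ht
    set Bt : V → G.edgeSet → ℝ := fun i => (incB G)ᵀ *ᵥ evec hA i with hBtdef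
    have hBtd : ∀ i j, Bt i ⬝ᵥ Bt j = if i = j then eg j + (r : ℝ) else 0 := fun i j =>
      incBt_evec_dot G hreg i j
    have hsBt : ∀ i, s i = Bt i ⬝ᵥ y := fun i =>
      (transpose_mulVec_dot (incB G) (evec hA i) y).symm
    have hegr : ∀ i, 0 ≤ eg i + (r : ℝ) := hplusr
    -- Bessel inequality
    have hBess : ∑ i, t i ≤ y ⬝ᵥ y := by
      set c : V → ℝ := fun i => if eg i + (r : ℝ) = 0 then 0 else s i / (eg i + (r : ℝ))
        with hc
      set w : G.edgeSet → ℝ := y - ∑ i, c i • Bt i with hw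
      have h0 := dot_self_nonneg' w
      have hSy : (∑ i, c i • Bt i) ⬝ᵥ y = ∑ i, c i * s i := by
        rw [sum_dotProduct']
        refine Finset.sum_congr rfl fun i _ => ?_
        rw [smul_dotProduct, smul_eq_mul, ← hsBt i]
      have hyS : y ⬝ᵥ (∑ i, c i • Bt i) = ∑ i, c i * s i := by
        rw [dotProduct_comm, hSy]
      have hSS : (∑ i, c i • Bt i) ⬝ᵥ (∑ j, c j • Bt j) = ∑ i, c i * c i * (eg i + (r : ℝ)) := by
        rw [sum_dotProduct']
        refine Finset.sum_congr rfl fun i _ => ?_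
        rw [smul_dotProduct, dotProduct_sum', smul_eq_mul]
        have : ∀ j ∈ Finset.univ, j ≠ i → Bt i ⬝ᵥ (c j • Bt j) = 0 := by
          intro j _ hji
          rw [dotProduct_smul, hBtd i j, if_neg (Ne.symm hji), smul_zero]
        rw [Finset.sum_eq_single i this (fun h => absurd (Finset.mem_univ _) h),
          dotProduct_smul, hBtd i i, if_pos rfl, smul_eq_mul]
        ring
      have hexp : w ⬝ᵥ w = y ⬝ᵥ y - 2 * ∑ i, c i * s i + ∑ i, c i * c i * (eg i + (r : ℝ)) := by
        rw [hw, sub_dotProduct, dotProduct_sub, dotProduct_sub,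
          hSy, hyS, hSS]
        ring
      have hcs : ∀ i, c i * s i = t i := by
        intro i
        by_cases h : eg i + (r : ℝ) = 0
        · simp [hc, ht, h]
        · simp only [hc, ht, if_neg h]
          field_simp
      have hcc : ∀ i, c i * c i * (eg i + (r : ℝ)) = t i := by
        intro i
        by_cases h : eg i + (r : ℝ) = 0
        · simp [hc, ht, h]
        · simp only [hc, ht, if_neg h]
          field_simp
      rw [hexp, Finset.sum_congr rfl fun i _ => hcs i,
        Finset.sum_congr rfl fun i _ => hcc i] at h0
      linarith
    -- pointwise inequality
    have hkey : ∀ i, θ * (a i * a i) + (θ + 2) * t i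
        ≤ eg i * (a i * a i) + 2 * (a i * s i) + s i * s i := by
      intro i
      by_cases h : eg i + (r : ℝ) = 0
      · have hBt0 : Bt i = 0 := eq_zero_of_dot_self (by rw [hBtd i i, if_pos rfl, h])
        have hs0 : s i = 0 := by rw [hsBt i, hBt0, zero_dotProduct]
        have hti : t i = 0 := by simp [ht, h]
        rw [hs0, hti]
        nlinarith [mul_self_nonneg (a i), heig_ge i, hθlam]
      · have hpos : 0 < eg i + (r : ℝ) := lt_of_le_of_ne (hegr i) (Ne.symm h)
        have hti : t i * (eg i + (r : ℝ)) = s i ^ 2 := by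
          simp only [ht, if_neg h]
          exact div_mul_cancel₀ _ h
        have hp : 0 ≤ (eg i - θ) * (eg i + (r : ℝ) - 2 - θ) - (eg i + (r : ℝ)) := by
          have h2f : (0 : ℝ) ≤ eg i + lam + (r : ℝ) - 3 - 2 * θ := by
            have := heig_ge i
            linarith
          nlinarith [mul_nonneg (sub_nonneg.mpr (heig_ge i)) h2f, hθp]
        have hegt : 0 < eg i - θ := by
          rcases lt_or_eq_of_le (le_trans hθlam (heig_ge i)) with hlt | heq
          · linarith
          · exfalso
            have h00 : (eg i - θ) * (eg i + (r : ℝ) - 2 - θ) = 0 := by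
              rw [show eg i - θ = 0 by linarith, zero_mul]
            linarith
        have hGmul : 0 ≤ ((eg i - θ) * (a i * a i) + 2 * (a i * s i) + s i * s i
            - (θ + 2) * t i) * ((eg i - θ) * (eg i + (r : ℝ))) := by
          have hid : ((eg i - θ) * (a i * a i) + 2 * (a i * s i) + s i * s i
              - (θ + 2) * t i) * ((eg i - θ) * (eg i + (r : ℝ)))
              = (eg i + (r : ℝ)) * ((eg i - θ) * a i + s i) ^ 2
                + ((eg i - θ) * (eg i + (r : ℝ) - 2 - θ) - (eg i + (r : ℝ))) * s i ^ 2
                - (eg i - θ) * (θ + 2) * (t i * (eg i + (r : ℝ)) - s i ^ 2) := by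
            ring
          rw [hid, hti, sub_self, mul_zero, sub_zero]
          exact add_nonneg (mul_nonneg hpos.le (sq_nonneg _)) (mul_nonneg hp (sq_nonneg _))
        have hfin := le_of_mul_le_mul_right
          (by linarith [hGmul] : 0 * ((eg i - θ) * (eg i + (r : ℝ)))
            ≤ ((eg i - θ) * (a i * a i) + 2 * (a i * s i) + s i * s i - (θ + 2) * t i)
              * ((eg i - θ) * (eg i + (r : ℝ))))
          (mul_pos hegt hpos)
        linarith [hfin]
    -- assemble
    have hxx : x ⬝ᵥ x = ∑ i, a i * a i := parseval hA x x
    have hyBt : y ⬝ᵥ ((incB G)ᵀ *ᵥ x) = x ⬝ᵥ (incB G *ᵥ y) := by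
      rw [dotProduct_comm, transpose_mulVec_dot]
    have hxAx : x ⬝ᵥ (adjMat G *ᵥ x) = ∑ i, eg i * (a i * a i) := by
      rw [parseval hA x (adjMat G *ᵥ x)]
      exact Finset.sum_congr rfl fun i _ => by rw [evec_dot_mulVec]; ring
    have hxBy : x ⬝ᵥ (incB G *ᵥ y) = ∑ i, a i * s i := parseval hA x (incB G *ᵥ y)
    have hByBy : (incB G *ᵥ y) ⬝ᵥ (incB G *ᵥ y) = ∑ i, s i * s i := parseval hA _ _
    have hyDy : y ⬝ᵥ (((incB G)ᵀ * incB G - (2 : ℝ) • 1) *ᵥ y)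
        = (incB G *ᵥ y) ⬝ᵥ (incB G *ᵥ y) - 2 * (y ⬝ᵥ y) := by
      rw [Matrix.sub_mulVec, dotProduct_sub,
        ← Matrix.mulVec_mulVec y (incB G)ᵀ (incB G),
        dotProduct_comm y, transpose_mulVec_dot, Matrix.smul_mulVec,
        Matrix.one_mulVec, dotProduct_smul, smul_eq_mul]
    rw [hz, hT, Matrix.fromBlocks_mulVec, sumElim_dotProduct_sumElim]
    simp only [Sum.elim_comp_inl, Sum.elim_comp_inr]
    rw [sumElim_dotProduct_sumElim, dotProduct_add, dotProduct_add,
      hyDy, hyBt, hxAx, hxBy, hByBy, hxx]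
    have hsum := Finset.sum_le_sum fun i (_ : i ∈ Finset.univ) => hkey i
    rw [Finset.sum_add_distrib, Finset.sum_add_distrib, Finset.sum_add_distrib,
      ← Finset.mul_sum, ← Finset.mul_sum, ← Finset.mul_sum] at hsum
    have hmul := mul_le_mul_of_nonpos_left hBess (by linarith : θ + 2 ≤ 0)
    linarith [hsum, hmul]
  -- the upper bound
  have hup : minEig hAT ≤ θ := by
    set u₀ : V → ℝ := evec hA i₀ with hu₀
    have huu : u₀ ⬝ᵥ u₀ = 1 := by rw [hu₀, evec_dot]; simp
    have hu0 : u₀ ≠ 0 := by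
      intro h; rw [h] at huu; simp at huu
    have hAu : adjMat G *ᵥ u₀ = lam • u₀ := by
      rw [hu₀, mulVec_evec, hi₀, ← hlam]
    have hBt : (incB G * (incB G)ᵀ) *ᵥ u₀ = (lam + (r : ℝ)) • u₀ := by
      rw [hBBt, Matrix.add_mulVec, hAu, Matrix.smul_mulVec, Matrix.one_mulVec, ← add_smul]
    by_cases hbip : lam + (r : ℝ) = 0
    · have hθval : θ = lam := by
        have hDval : D = ((r : ℝ) - 2) ^ 2 := by rw [hD]; nlinarith [hbip]
        have hsD : Real.sqrt D = (r : ℝ) - 2 := by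
          rw [hDval, Real.sqrt_sq (by linarith : (0:ℝ) ≤ (r : ℝ) - 2)]
        rw [hθ, hsD]
        have : lam = -(r : ℝ) := by linarith
        rw [this]; ring
      have hBtu : (incB G)ᵀ *ᵥ u₀ = 0 := by
        apply eq_zero_of_dot_self
        rw [hu₀, incBt_evec_dot G hreg i₀ i₀, if_pos rfl, hi₀, ← hlam, hbip]
      refine minEig_le_of_eigvec hAT (v := Sum.elim u₀ (0 : G.edgeSet → ℝ))
        (sum_elim_ne_zero hu0 _) ?_
      rw [hT, Matrix.fromBlocks_mulVec, smul_sum_elim]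
      simp only [Sum.elim_comp_inl, Sum.elim_comp_inr, Matrix.mulVec_zero, add_zero,
        hAu, hθval, hBtu, smul_zero]
    · set c : ℝ := (θ - lam) / (lam + (r : ℝ)) with hc
      have hcr : c * (lam + (r : ℝ)) = θ - lam := div_mul_cancel₀ _ hbip
      have hkey : 1 + c * (lam + (r : ℝ)) - 2 * c = θ * c := by
        have h7 : θ * (θ - lam) = (1 + θ - lam) * (lam + (r : ℝ)) - 2 * (θ - lam) := by
          linear_combination hθp
        have h8 : (1 + c * (lam + (r : ℝ)) - 2 * c) * (lam + (r : ℝ))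
            = (θ * c) * (lam + (r : ℝ)) := by
          linear_combination (lam + (r : ℝ) - 2 - θ) * hcr + h7 + (-1/2 : ℝ) * hsq
        exact mul_right_cancel₀ hbip h8
      have htop : adjMat G *ᵥ u₀ + incB G *ᵥ (c • ((incB G)ᵀ *ᵥ u₀)) = θ • u₀ := by
        rw [Matrix.mulVec_smul, Matrix.mulVec_mulVec, hBt, hAu, smul_smul, ← add_smul,
          show lam + c * (lam + (r : ℝ)) = θ by rw [hcr]; ring]
      have hbot : (incB G)ᵀ *ᵥ u₀ + ((incB G)ᵀ * incB G - (2 : ℝ) • 1) *ᵥ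
          (c • ((incB G)ᵀ *ᵥ u₀)) = θ • (c • ((incB G)ᵀ *ᵥ u₀)) := by
        rw [Matrix.sub_mulVec, Matrix.mulVec_smul,
          ← Matrix.mulVec_mulVec ((incB G)ᵀ *ᵥ u₀) (incB G)ᵀ (incB G),
          Matrix.mulVec_mulVec u₀ (incB G) (incB G)ᵀ, hBt, Matrix.smul_mulVec,
          Matrix.one_mulVec, Matrix.mulVec_smul, smul_smul θ c, ← hkey]
        module
      refine minEig_le_of_eigvec hAT (v := Sum.elim u₀ (c • ((incB G)ᵀ *ᵥ u₀)))
        (sum_elim_ne_zero hu0 _) ?_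
      rw [hT, Matrix.fromBlocks_mulVec, smul_sum_elim]
      simp only [Sum.elim_comp_inl, Sum.elim_comp_inr]
      rw [htop, hbot]
  exact ⟨le_antisymm hup hlow, hθ2⟩

end SpreadPaper
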